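/- Let C ⊆ L^∞(Ω, F, P) be a norm-closed convex cone with C ∩ L^∞_+ = {0} and -L^∞_+ ⊆ C. Then there exists a probability measure Q equivalent to P such that sup_{x ∈ C₁} ∫ x dQ < ∞, where C₁ = {x ∈ C : ess inf x ≥ -1}. -/

import Mathlib

open MeasureTheory Filter Set ENNReal
open scoped RealInnerProductSpace NNReal

namespace KrepsYan
set_option linter.unusedSectionVars false
set_option linter.unusedVariables false
set_option maxHeartbeats 1000000

variable {Ω : Type*} [MeasurableSpace Ω] {P : Measure Ω} [IsProbabilityMeasure P]
variable {C : Set (Lp ℝ ⊤ P)}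

noncomputable def toL2 (x : Lp ℝ ⊤ P) : Lp ℝ 2 P :=
  MemLp.toLp ⇑x ((Lp.memLp x).mono_exponent le_top)

lemma toL2_ae (x : Lp ℝ ⊤ P) : ⇑(toL2 x) =ᵐ[P] ⇑x := MemLp.coeFn_toLp _

lemma inner_eq (f g : Lp ℝ 2 P) : ⟪f, g⟫ = ∫ ω, f ω * g ω ∂P := by
  rw [MeasureTheory.L2.inner_def]
  congr 1
  funext ω; simp only [RCLike.inner_apply, conj_trivial]; ring

lemma ae_neg_one_le (x : Lp ℝ ⊤ P) (h : (-1:ℝ) ≤ essInf (⇑x) P) :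
    ∀ᵐ ω ∂P, -1 ≤ x ω := by
  have hK : eLpNormEssSup (⇑x) P ≠ ⊤ := by
    have := Lp.eLpNorm_ne_top x
    rwa [eLpNorm_exponent_top] at this
  have hb : ∀ᵐ ω ∂P, ‖x ω‖ ≤ (eLpNormEssSup (⇑x) P).toReal := by
    filter_upwards [ae_le_eLpNormEssSup (f := ⇑x) (μ := P)] with ω hω
    have : ‖x ω‖₊ ≤ (eLpNormEssSup (⇑x) P).toNNReal := by
      rwa [← ENNReal.coe_le_coe, ENNReal.coe_toNNReal hK]
    simpa [← NNReal.coe_le_coe, ENNReal.coe_toNNReal_eq_toReal] using this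
  have hbdd : IsBoundedUnder (· ≥ ·) (ae P) (⇑x) := by
    refine ⟨-(eLpNormEssSup (⇑x) P).toReal, ?_⟩
    rw [eventually_map]
    filter_upwards [hb] with ω hω
    have := neg_le_of_abs_le (by simpa [Real.norm_eq_abs] using hω)
    linarith [abs_le.mp (by simpa [Real.norm_eq_abs] using hω)]
  have h2 := ae_essInf_le (μ := P) (f := ⇑x) hbdd
  filter_upwards [h2] with ω hω using le_trans h hω

lemma zero_mem (hC_pos : C ∩ {x : Lp ℝ ⊤ P | 0 ≤ᵐ[P] ⇑x} = {0}) : (0 : Lp ℝ ⊤ P) ∈ C := by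
  have h : (0 : Lp ℝ ⊤ P) ∈ ({0} : Set (Lp ℝ ⊤ P)) := rfl
  rw [← hC_pos] at h
  exact h.1

lemma add_mem (hconv : Convex ℝ C) (hcone : ∀ c : ℝ, 0 ≤ c → ∀ x ∈ C, c • x ∈ C)
    {x y : Lp ℝ ⊤ P} (hx : x ∈ C) (hy : y ∈ C) : x + y ∈ C := by
  have h := hconv hx hy (by norm_num : (0:ℝ) ≤ 1/2) (by norm_num : (0:ℝ) ≤ 1/2) (by norm_num)
  have h2 := hcone 2 (by norm_num) _ h
  have h3 : (2:ℝ) • ((1/2 : ℝ) • x + (1/2 : ℝ) • y) = x + y := by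
    rw [smul_add, smul_smul, smul_smul]; norm_num
  rwa [h3] at h2

def B2 (P : Measure Ω) [IsProbabilityMeasure P] (C : Set (Lp ℝ ⊤ P)) : Set (Lp ℝ 2 P) :=
  {y | ∃ x ∈ C, (∀ᵐ ω ∂P, -1 ≤ x ω) ∧ ∀ᵐ ω ∂P, y ω ≤ x ω}

lemma convex_B2 (hconv : Convex ℝ C) : Convex ℝ (B2 P C) := by
  rintro y₁ ⟨x₁, hx₁, hg₁, hd₁⟩ y₂ ⟨x₂, hx₂, hg₂, hd₂⟩ a b ha hb hab
  refine ⟨a • x₁ + b • x₂, hconv hx₁ hx₂ ha hb hab, ?_, ?_⟩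
  · filter_upwards [hg₁, hg₂, Lp.coeFn_add (a • x₁) (b • x₂), Lp.coeFn_smul a x₁,
      Lp.coeFn_smul b x₂] with ω h1 h2 h3 h4 h5
    rw [h3]; simp only [Pi.add_apply, h4, h5, Pi.smul_apply, smul_eq_mul]
    nlinarith
  · filter_upwards [hd₁, hd₂, Lp.coeFn_add (a • x₁) (b • x₂), Lp.coeFn_smul a x₁,
      Lp.coeFn_smul b x₂, Lp.coeFn_add (a • y₁) (b • y₂), Lp.coeFn_smul a y₁,
      Lp.coeFn_smul b y₂] with ω h1 h2 h3 h4 h5 h6 h7 h8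
    rw [h3, h6]
    simp only [Pi.add_apply, h4, h5, h7, h8, Pi.smul_apply, smul_eq_mul]
    nlinarith

-- step 1 : the approximation selection
lemma approx_selection
    {N : Set Ω} (hN : MeasurableSet N) (hNpos : 0 < P N)
    (h : ∀ t : ℝ, 0 < t →
      t • (indicatorConstLp 2 hN (measure_ne_top P N) (1:ℝ)) ∈ closure (B2 P C)) :
    ∀ k : ℕ, ∃ x ∈ C, (∀ᵐ ω ∂P, -1 ≤ x ω) ∧
      P (N ∩ {ω | x ω < (k:ℝ)+1}) ≤ P N * (2:ℝ≥0∞)⁻¹ ^ (k+2) := by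
  intro k
  set t : ℝ := (k:ℝ) + 2 with ht
  set lam : ℝ := (k:ℝ) + 1 with hlam
  have hPNtop : P N ≠ ⊤ := measure_ne_top P N
  have hPNr : 0 < (P N).toReal := ENNReal.toReal_pos hNpos.ne' hPNtop
  set ε : ℝ := Real.sqrt ((P N).toReal * (2⁻¹:ℝ) ^ (k+2)) with hε
  have hεpos : 0 < ε := Real.sqrt_pos.mpr (by positivity)
  have hmem := h t (by positivity)
  rw [Metric.mem_closure_iff] at hmem
  obtain ⟨y, hyB2, hdist⟩ := hmem ε hεpos
  obtain ⟨x, hxC, hxge, hyx⟩ := hyB2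
  refine ⟨x, hxC, hxge, ?_⟩
  set ind : Lp ℝ 2 P := indicatorConstLp 2 hN (measure_ne_top P N) (1:ℝ) with hind
  set d : Lp ℝ 2 P := t • ind - y with hd
  have hdnorm : ‖d‖ < ε := by rwa [dist_eq_norm] at hdist
  set A : Set Ω := N ∩ {ω | x ω < lam} with hA
  have hAmeas : MeasurableSet A :=
    hN.inter (measurableSet_lt (Lp.stronglyMeasurable x).measurable measurable_const)
  -- a.e. on A, 1 ≤ d
  have hA1 : ∀ᵐ ω ∂P, ω ∈ A → 1 ≤ d ω := by
    have h3f : ⇑ind =ᵐ[P] N.indicator fun _ => (1:ℝ) := indicatorConstLp_coeFn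
    filter_upwards [Lp.coeFn_sub (t • ind) y, Lp.coeFn_smul t ind, h3f, hyx]
      with ω h1 h2 h3 h4 hωA
    have hωN : ω ∈ N := hωA.1
    have hxω : x ω < lam := hωA.2
    have : d ω = t * N.indicator (fun _ => (1:ℝ)) ω - y ω := by
      rw [h1]; simp only [Pi.sub_apply, h2, Pi.smul_apply, smul_eq_mul, h3]
    rw [this, Set.indicator_of_mem hωN]
    have : y ω ≤ x ω := h4
    simp only [mul_one]
    have : t - lam = 1 := by rw [ht, hlam]; ring
    linarith
  -- integrability of d * d
  have hdd_int : Integrable (fun ω => d ω * d ω) P := L2.integrable_inner (𝕜 := ℝ) d d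
  have hdd_nonneg : 0 ≤ᵐ[P] fun ω => d ω * d ω :=
    Eventually.of_forall fun ω => mul_self_nonneg _
  -- chain
  have h1 : (P A).toReal ≤ ∫ ω in A, d ω * d ω ∂P := by
    have e1 : ∫ (_ : Ω) in A, (1:ℝ) ∂P = (P A).toReal := by
      rw [setIntegral_const]; simp; rfl
    rw [← e1]
    refine setIntegral_mono_on_ae ((integrableOn_const_iff (C := (1:ℝ))).mpr (Or.inr ?_)) hdd_int.integrableOn
      hAmeas ?_
    · exact lt_of_le_of_lt (measure_mono (Set.inter_subset_left)) (measure_lt_top P N)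
    · filter_upwards [hA1] with ω hω hωA
      have := hω hωA
      nlinarith
  have h2 : ∫ ω in A, d ω * d ω ∂P ≤ ∫ ω, d ω * d ω ∂P :=
    setIntegral_le_integral hdd_int hdd_nonneg
  have h3 : ∫ ω, d ω * d ω ∂P = ‖d‖ ^ 2 := by
    rw [← inner_eq d d]; exact real_inner_self_eq_norm_sq d
  have h4 : ‖d‖ ^ 2 ≤ ε ^ 2 := by
    have h0 : (0:ℝ) ≤ ‖d‖ := norm_nonneg d
    nlinarith
  have h5 : ε ^ 2 = (P N).toReal * (2⁻¹:ℝ) ^ (k+2) := Real.sq_sqrt (by positivity)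
  have hreal : (P A).toReal ≤ (P N).toReal * (2⁻¹:ℝ) ^ (k+2) := by
    calc (P A).toReal ≤ ∫ ω in A, d ω * d ω ∂P := h1
    _ ≤ ∫ ω, d ω * d ω ∂P := h2
    _ = ‖d‖^2 := h3
    _ ≤ ε^2 := h4
    _ = _ := h5
  -- convert to ENNReal
  have hAtop : P A ≠ ⊤ := (lt_of_le_of_lt (measure_mono Set.inter_subset_left)
    (measure_lt_top P N)).ne
  rw [← ENNReal.ofReal_toReal hAtop]
  calc ENNReal.ofReal (P A).toReal
      ≤ ENNReal.ofReal ((P N).toReal * (2⁻¹:ℝ) ^ (k+2)) := ENNReal.ofReal_le_ofReal hreal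
    _ = ENNReal.ofReal (P N).toReal * ENNReal.ofReal ((2⁻¹:ℝ) ^ (k+2)) :=
        ENNReal.ofReal_mul ENNReal.toReal_nonneg
    _ = P N * (2:ℝ≥0∞)⁻¹ ^ (k+2) := by
        rw [ENNReal.ofReal_toReal hPNtop, ENNReal.ofReal_pow (by norm_num)]
        congr 2
        rw [ENNReal.ofReal_inv_of_pos (by norm_num)]
        norm_num

/-- From a sequence of elements of `C` that are `≥ λ_k` on most of `N`, derive an
arbitrage, contradicting `C ∩ L∞₊ = {0}`. -/
lemma contradiction_of_selection
    (hclosed : IsClosed C) (hconv : Convex ℝ C)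
    (hcone : ∀ c : ℝ, 0 ≤ c → ∀ x ∈ C, c • x ∈ C)
    (hC_pos : C ∩ {x : Lp ℝ ⊤ P | 0 ≤ᵐ[P] ⇑x} = {0})
    (hneg : ∀ x : Lp ℝ ⊤ P, 0 ≤ᵐ[P] ⇑x → -x ∈ C)
    {N : Set Ω} (hN : MeasurableSet N) (hNpos : 0 < P N)
    (hsel : ∀ k : ℕ, ∃ x ∈ C, (∀ᵐ ω ∂P, -1 ≤ x ω) ∧
      P (N ∩ {ω | x ω < (k:ℝ)+1}) ≤ P N * (2:ℝ≥0∞)⁻¹ ^ (k+2)) : False := by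
  choose x hxC hxge hxmeas using hsel
  set A : ℕ → Set Ω := fun k => N ∩ {ω | x k ω < (k:ℝ)+1} with hA
  have hAmeas : ∀ k, MeasurableSet (A k) := fun k =>
    hN.inter (measurableSet_lt (Lp.stronglyMeasurable (x k)).measurable measurable_const)
  set B : Set Ω := N \ ⋃ k, A k with hB
  have hBmeas : MeasurableSet B := hN.diff (MeasurableSet.iUnion hAmeas)
  -- P (⋃ A k) ≤ P N / 2
  have hU : P (⋃ k, A k) ≤ P N * 2⁻¹ := by
    calc P (⋃ k, A k) ≤ ∑' k, P (A k) := measure_iUnion_le _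
      _ ≤ ∑' k, P N * (2:ℝ≥0∞)⁻¹ ^ (k+2) := ENNReal.tsum_le_tsum hxmeas
      _ = P N * 2⁻¹ := by
          have he : ∀ k : ℕ, P N * (2:ℝ≥0∞)⁻¹ ^ (k+2) = (P N * (2:ℝ≥0∞)⁻¹^2) * 2⁻¹ ^ k := by
            intro k; rw [pow_add, mul_comm ((2:ℝ≥0∞)⁻¹ ^ k) _, mul_assoc]
          calc ∑' k, P N * (2:ℝ≥0∞)⁻¹ ^ (k+2)
              = ∑' k, (P N * (2:ℝ≥0∞)⁻¹^2) * 2⁻¹ ^ k := tsum_congr he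
            _ = (P N * (2:ℝ≥0∞)⁻¹^2) * ∑' k : ℕ, 2⁻¹ ^ k := ENNReal.tsum_mul_left
            _ = P N * 2⁻¹ := by
                rw [ENNReal.tsum_geometric, ENNReal.one_sub_inv_two, inv_inv, mul_assoc]
                congr 1
                rw [pow_two, mul_assoc, ENNReal.inv_mul_cancel (by norm_num) (by norm_num),
                  mul_one]
  have hBpos : 0 < P B := by
    by_contra h0
    push_neg at h0
    have hB0 : P B = 0 := le_antisymm h0 zero_le
    have hsub : N ⊆ B ∪ ⋃ k, A k := by
      intro ω hω
      by_cases hω2 : ω ∈ ⋃ k, A k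
      · exact Or.inr hω2
      · exact Or.inl ⟨hω, hω2⟩
    have : P N ≤ P B + P (⋃ k, A k) := le_trans (measure_mono hsub) (measure_union_le _ _)
    rw [hB0, zero_add] at this
    have hlt : P N * 2⁻¹ < P N := by
      rw [mul_comm, ← ENNReal.div_eq_inv_mul]
      exact ENNReal.half_lt_self hNpos.ne' (measure_ne_top P N)
    exact absurd (le_trans this hU) (not_le.mpr hlt)
  -- the indicator of B
  set indB : Lp ℝ ⊤ P := indicatorConstLp ⊤ hBmeas (measure_ne_top P B) (1:ℝ) with hindB
  have hindB_coe : ⇑indB =ᵐ[P] B.indicator fun _ => (1:ℝ) := indicatorConstLp_coeFn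
  -- the approximating sequence
  set U : ℕ → Lp ℝ ⊤ P := fun k =>
    ((k:ℝ)+1)⁻¹ • x k - Lp.posPart (((k:ℝ)+1)⁻¹ • x k - indB) with hUdef
  have hUC : ∀ k, U k ∈ C := by
    intro k
    have h1 : ((k:ℝ)+1)⁻¹ • x k ∈ C := hcone _ (by positivity) _ (hxC k)
    have h2 : (0:Ω → ℝ) ≤ᵐ[P] ⇑(Lp.posPart (((k:ℝ)+1)⁻¹ • x k - indB)) := by
      filter_upwards [Lp.coeFn_posPart (((k:ℝ)+1)⁻¹ • x k - indB)] with ω hω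
      rw [hω]; exact le_max_right _ _
    have h3 := hneg _ h2
    have := add_mem hconv hcone h1 h3
    rwa [← sub_eq_add_neg] at this
  -- the norm bound
  have hUbd : ∀ k, ∀ᵐ ω ∂P, ‖(U k - indB) ω‖ ≤ ((k:ℝ)+1)⁻¹ := by
    intro k
    filter_upwards [Lp.coeFn_sub (U k) indB,
      Lp.coeFn_sub (((k:ℝ)+1)⁻¹ • x k) (Lp.posPart (((k:ℝ)+1)⁻¹ • x k - indB)),
      Lp.coeFn_posPart (((k:ℝ)+1)⁻¹ • x k - indB),
      Lp.coeFn_sub (((k:ℝ)+1)⁻¹ • x k) indB,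
      Lp.coeFn_smul (((k:ℝ)+1)⁻¹) (x k),
      hindB_coe, hxge k] with ω e1 e2 e3 e4 e5 e6 e7
    have hkpos : (0:ℝ) < (k:ℝ)+1 := by positivity
    set a : ℝ := ((k:ℝ)+1)⁻¹ * x k ω with ha
    have hxa : ((k:ℝ)+1)⁻¹ • x k ω = a := rfl
    have hexp : (U k - indB) ω = a - max (a - indB ω) 0 - indB ω := by
      rw [e1]
      simp only [Pi.sub_apply]
      rw [e2]
      simp only [Pi.sub_apply]
      rw [e3, e4]
      simp only [Pi.sub_apply]
      rw [e5]
      simp only [Pi.smul_apply, smul_eq_mul]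
      rfl
    by_cases hωB : ω ∈ B
    · -- here x k ω ≥ k+1 so a ≥ 1, and indB ω = 1
      have hiB : indB ω = 1 := by rw [e6, Set.indicator_of_mem hωB]
      have hωN : ω ∈ N := hωB.1
      have hωA : ω ∉ A k := fun hmem => hωB.2 (Set.mem_iUnion.mpr ⟨k, hmem⟩)
      have hxk : ¬ (x k ω < (k:ℝ)+1) := fun hlt => hωA ⟨hωN, hlt⟩
      push_neg at hxk
      have hage : 1 ≤ a := by
        rw [ha]
        rw [inv_mul_eq_div, le_div_iff₀ hkpos, one_mul]
        exact hxk
      rw [hexp, hiB]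
      have hmax : max (a - 1) 0 = a - 1 := max_eq_left (by linarith)
      have hz : a - max (a - 1) 0 - 1 = 0 := by rw [hmax]; ring
      rw [hz, norm_zero]
      positivity
    · have hiB : indB ω = 0 := by rw [e6, Set.indicator_of_notMem hωB]
      have hage : -(((k:ℝ)+1)⁻¹) ≤ a := by
        rw [ha]
        have h7 : -1 ≤ x k ω := e7
        have := mul_le_mul_of_nonneg_left h7 (le_of_lt (inv_pos.mpr hkpos))
        simpa using this
      have hinv : (0:ℝ) ≤ ((k:ℝ)+1)⁻¹ := by positivity
      rw [hexp, hiB]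
      rcases le_or_gt a 0 with hc | hc
      · have hmax : max (a - 0) 0 = 0 := by rw [sub_zero]; exact max_eq_right hc
        have hz : a - max (a - 0) 0 - 0 = a := by rw [hmax]; ring
        rw [hz, Real.norm_eq_abs, abs_le]
        exact ⟨by linarith, by linarith⟩
      · have hmax : max (a - 0) 0 = a := by rw [sub_zero]; exact max_eq_left hc.le
        have hz : a - max (a - 0) 0 - 0 = 0 := by rw [hmax]; ring
        rw [hz, norm_zero]
        exact hinv
  -- Lp norm bound
  have hnorm : ∀ k, ‖U k - indB‖ ≤ ((k:ℝ)+1)⁻¹ := by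
    intro k
    have := Lp.norm_le_of_ae_bound (f := U k - indB) (C := ((k:ℝ)+1)⁻¹)
      (by positivity) (hUbd k)
    have hone : (measureUnivNNReal P : ℝ) = 1 := by
      simp [measureUnivNNReal, measure_univ]
    rwa [hone, Real.one_rpow, one_mul] at this
  -- convergence
  have htend : Tendsto (fun k => U k) atTop (nhds indB) := by
    rw [tendsto_iff_norm_sub_tendsto_zero]
    refine squeeze_zero (fun k => norm_nonneg _) hnorm ?_
    have := tendsto_one_div_add_atTop_nhds_zero_nat (𝕜 := ℝ)
    simpa [one_div] using this
  have hindBC : indB ∈ C := hclosed.mem_of_tendsto htend (Eventually.of_forall hUC)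
  -- indB is nonnegative
  have hindBnn : indB ∈ {x : Lp ℝ ⊤ P | 0 ≤ᵐ[P] ⇑x} := by
    filter_upwards [hindB_coe] with ω hω
    rw [hω]
    exact Set.indicator_nonneg (fun _ _ => zero_le_one) ω
  have : indB ∈ C ∩ {x : Lp ℝ ⊤ P | 0 ≤ᵐ[P] ⇑x} := ⟨hindBC, hindBnn⟩
  rw [hC_pos] at this
  have hzero : indB = 0 := this
  have hae : B.indicator (fun _ => (1:ℝ)) =ᵐ[P] 0 := by
    refine (hindB_coe.symm.trans ?_)
    rw [hzero]
    exact Lp.coeFn_zero _ _ _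
  have hBnull : ∀ᵐ ω ∂P, ω ∉ B := by
    filter_upwards [hae] with ω hω hmem
    rw [Set.indicator_of_mem hmem] at hω
    exact one_ne_zero hω
  have : P B = 0 := by
    have h2 := hBnull
    rw [ae_iff] at h2
    simpa using h2
  exact absurd this hBpos.ne'

/-- Case 1 of the key lemma: a separating density from the Hahn-Banach theorem. -/
lemma density_of_not_mem_closure
    (hconv : Convex ℝ C)
    (hC_pos : C ∩ {x : Lp ℝ ⊤ P | 0 ≤ᵐ[P] ⇑x} = {0})
    {N : Set Ω} (hN : MeasurableSet N) (hNpos : 0 < P N)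
    {t : ℝ} (htpos : 0 < t)
    (hnm : t • (indicatorConstLp 2 hN (measure_ne_top P N) (1:ℝ)) ∉ closure (B2 P C)) :
    ∃ W : Lp ℝ 2 P, (0 ≤ᵐ[P] ⇑W) ∧ (0 < ∫ ω in N, W ω ∂P) ∧
      ∃ β : ℝ, ∀ x ∈ C, (∀ᵐ ω ∂P, -1 ≤ x ω) → ∫ ω, W ω * x ω ∂P ≤ β := by
  obtain ⟨f, u, hfD, hfu⟩ := geometric_hahn_banach_closed_point
    (convex_B2 hconv).closure isClosed_closure hnm
  set W : Lp ℝ 2 P := (InnerProductSpace.toDual ℝ (Lp ℝ 2 P)).symm f with hW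
  have hWinner : ∀ y : Lp ℝ 2 P, ⟪W, y⟫ = f y := fun y =>
    InnerProductSpace.toDual_symm_apply
  -- basic facts
  have h0B2 : (0 : Lp ℝ 2 P) ∈ B2 P C := by
    refine ⟨0, zero_mem hC_pos, ?_, ?_⟩
    · filter_upwards [Lp.coeFn_zero ℝ ⊤ P] with ω hω
      rw [hω]; norm_num
    · filter_upwards [Lp.coeFn_zero ℝ ⊤ P, Lp.coeFn_zero ℝ 2 P] with ω h1 h2
      rw [h1, h2]
  have hupos : 0 < u := by
    have := hfD 0 (subset_closure h0B2)
    simpa using this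
  -- nonneg directions
  have hfnonneg : ∀ g : Lp ℝ 2 P, (0 ≤ᵐ[P] ⇑g) → 0 ≤ f g := by
    intro g hg
    by_contra hneg
    push_neg at hneg
    set s : ℝ := (u + 1) / (-f g) with hs
    have hspos : 0 < s := div_pos (by linarith) (by linarith)
    have hmem : -(s • g) ∈ B2 P C := by
      refine ⟨0, zero_mem hC_pos, ?_, ?_⟩
      · filter_upwards [Lp.coeFn_zero ℝ ⊤ P] with ω hω
        rw [hω]; norm_num
      · filter_upwards [Lp.coeFn_zero ℝ ⊤ P, Lp.coeFn_neg (s • g), Lp.coeFn_smul s g, hg]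
          with ω h1 h2 h3 h4
        rw [h1, h2]
        simp only [Pi.neg_apply, h3, Pi.smul_apply, smul_eq_mul, Pi.zero_apply]
        have h5 : (0:ℝ) ≤ g ω := h4
        nlinarith
    have hlt := hfD _ (subset_closure hmem)
    rw [map_neg, f.map_smul, smul_eq_mul] at hlt
    have hfg : 0 < -f g := by linarith
    have hkey : s * (-f g) = u + 1 := by
      rw [hs, div_mul_cancel₀ _ (by linarith : -f g ≠ 0)]
    nlinarith [hkey, hlt]
  -- W is a.e. nonnegative
  have hWnn : 0 ≤ᵐ[P] ⇑W := by
    have hg := hfnonneg (Lp.posPart (-W)) ?_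
    swap
    · filter_upwards [Lp.coeFn_posPart (-W)] with ω hω
      rw [hω]; exact le_max_right _ _
    rw [← hWinner] at hg
    rw [inner_eq] at hg
    -- ∫ W * max(-W, 0) = - ∫ (max(-W,0))^2 ≥ 0  ⟹ ∫ (max(-W,0))^2 ≤ 0
    have hint : Integrable (fun ω => W ω * Lp.posPart (-W) ω) P :=
      (L2.integrable_inner (𝕜 := ℝ) W (Lp.posPart (-W))).congr
        (Eventually.of_forall fun ω => by simp only [RCLike.inner_apply, conj_trivial]; ring)
    have hptwise : ∀ᵐ ω ∂P, W ω * Lp.posPart (-W) ω = -(max (-W ω) 0)^2 := by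
      filter_upwards [Lp.coeFn_posPart (-W), Lp.coeFn_neg W] with ω h1 h2
      rw [h1, h2]
      simp only [Pi.neg_apply]
      rcases le_or_gt (W ω) 0 with hc | hc
      · rw [max_eq_left (by linarith)]; ring
      · rw [max_eq_right (by linarith)]; ring
    have heq : ∫ ω, W ω * Lp.posPart (-W) ω ∂P = ∫ ω, -(max (-W ω) 0)^2 ∂P :=
      integral_congr_ae hptwise
    rw [heq] at hg
    rw [integral_neg] at hg
    have hsqint : Integrable (fun ω => (max (-W ω) 0)^2) P := by
      have h := (hint.congr hptwise).neg
      refine h.congr (Eventually.of_forall fun ω => by simp)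
    have hz : ∫ ω, (max (-W ω) 0)^2 ∂P = 0 := le_antisymm (by linarith)
      (integral_nonneg fun ω => sq_nonneg _)
    have hzz := (integral_eq_zero_iff_of_nonneg_ae
      (Eventually.of_forall fun ω => sq_nonneg (max (-W ω) 0)) hsqint).mp hz
    filter_upwards [hzz] with ω hω
    have : (max (-W ω) 0)^2 = 0 := hω
    have h2 : max (-W ω) 0 = 0 := by
      nlinarith [le_max_right (-W ω) (0:ℝ), sq_nonneg (max (-W ω) 0)]
    by_contra hcon
    push_neg at hcon
    rw [max_eq_left (by linarith)] at h2
    linarith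
  refine ⟨W, hWnn, ?_, u, ?_⟩
  · -- ∫_N W > 0
    have hlt : u < f (t • (indicatorConstLp 2 hN (measure_ne_top P N) (1:ℝ))) := hfu
    rw [f.map_smul, smul_eq_mul] at hlt
    have hfind : 0 < f (indicatorConstLp 2 hN (measure_ne_top P N) (1:ℝ)) := by
      nlinarith
    rw [← hWinner, inner_eq] at hfind
    have hieq : ∫ ω, W ω * (indicatorConstLp 2 hN (measure_ne_top P N) (1:ℝ)) ω ∂P
        = ∫ ω in N, W ω ∂P := by
      rw [← integral_indicator hN]
      refine integral_congr_ae ?_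
      have hic : ⇑(indicatorConstLp 2 hN (measure_ne_top P N) (1:ℝ)) =ᵐ[P]
          N.indicator fun _ => (1:ℝ) := indicatorConstLp_coeFn
      filter_upwards [hic] with ω hω
      rw [hω]
      by_cases hωN : ω ∈ N
      · rw [Set.indicator_of_mem hωN, Set.indicator_of_mem hωN, mul_one]
      · rw [Set.indicator_of_notMem hωN, Set.indicator_of_notMem hωN, mul_zero]
    rwa [hieq] at hfind
  · -- the uniform bound on C₁
    intro x hxC hxge
    have hmem : toL2 x ∈ B2 P C := ⟨x, hxC, hxge, by
      filter_upwards [toL2_ae x] with ω hω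
      rw [hω]⟩
    have := hfD _ (subset_closure hmem)
    rw [← hWinner, inner_eq] at this
    have heq : ∫ ω, W ω * (toL2 x) ω ∂P = ∫ ω, W ω * x ω ∂P := by
      refine integral_congr_ae ?_
      filter_upwards [toL2_ae x] with ω hω
      rw [hω]
    rw [heq] at this
    exact this.le

/-- The exhaustion argument: from a separating density for every non-null set, get an a.e.
strictly positive density with a uniform bound. -/
lemma exists_positive_density
    (hstar : ∀ N : Set Ω, MeasurableSet N → 0 < P N →
      ∃ W : Lp ℝ 2 P, (0 ≤ᵐ[P] ⇑W) ∧ (0 < ∫ ω in N, W ω ∂P) ∧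
        ∃ β : ℝ, 0 ≤ β ∧ ∀ x ∈ C, (∀ᵐ ω ∂P, -1 ≤ x ω) → ∫ ω, W ω * x ω ∂P ≤ β) :
    ∃ Z : Lp ℝ 2 P, (∀ᵐ ω ∂P, 0 < Z ω) ∧
      ∃ β : ℝ, ∀ x ∈ C, (∀ᵐ ω ∂P, -1 ≤ x ω) → ∫ ω, Z ω * x ω ∂P ≤ β := by
  classical
  -- the family of admissible densities
  set S : Set (Lp ℝ 2 P) := {W | (0 ≤ᵐ[P] ⇑W) ∧
    ∃ β : ℝ, 0 ≤ β ∧ ∀ x ∈ C, (∀ᵐ ω ∂P, -1 ≤ x ω) → ∫ ω, W ω * x ω ∂P ≤ β} with hS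
  have hzeroS : (0 : Lp ℝ 2 P) ∈ S := by
    refine ⟨?_, 0, le_refl 0, ?_⟩
    · filter_upwards [Lp.coeFn_zero ℝ 2 P] with ω hω
      rw [hω]
    · intro x hx hge
      have : (fun ω => (0:Lp ℝ 2 P) ω * x ω) =ᵐ[P] fun _ => (0:ℝ) := by
        filter_upwards [Lp.coeFn_zero ℝ 2 P] with ω hω
        rw [hω]; simp
      rw [integral_congr_ae this, integral_zero]
  set T : Set ℝ := (fun W => (P {ω | 0 < W ω}).toReal) '' S with hT
  have hTne : T.Nonempty := ⟨_, ⟨0, hzeroS, rfl⟩⟩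
  have hTbdd : BddAbove T := by
    refine ⟨1, ?_⟩
    rintro a ⟨W, _, rfl⟩
    have h1 : P {ω | 0 < W ω} ≤ P univ := measure_mono (subset_univ _)
    have := ENNReal.toReal_mono (measure_ne_top P univ) h1
    simpa [measure_univ] using this
  set r : ℝ := sSup T with hr
  -- select an approximating sequence
  have hsel : ∀ n : ℕ, ∃ W ∈ S, r - 1/(n+1) < (P {ω | 0 < W ω}).toReal := by
    intro n
    have hlt : r - 1/(n+1) < r := by
      have : (0:ℝ) < 1/(n+1) := by positivity
      linarith
    obtain ⟨a, haT, hra⟩ := exists_lt_of_lt_csSup hTne hlt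
    obtain ⟨W, hWS, rfl⟩ := haT
    exact ⟨W, hWS, hra⟩
  choose W hWS hWr using hsel
  have hWnn : ∀ n, 0 ≤ᵐ[P] ⇑(W n) := fun n => (hWS n).1
  choose β hβ0 hβ using fun n => (hWS n).2
  -- the summable mixture
  set c : ℕ → ℝ := fun n => (1/2)^n / ((1 + ‖W n‖) * (1 + β n)) with hc
  have hcpos : ∀ n, 0 < c n := by
    intro n
    have h1 : (0:ℝ) < 1 + ‖W n‖ := by positivity
    have h2 : (0:ℝ) < 1 + β n := by have := hβ0 n; linarith
    positivity
  have hnormle : ∀ n, ‖c n • W n‖ ≤ (1/2)^n := by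
    intro n
    rw [norm_smul, Real.norm_eq_abs, abs_of_pos (hcpos n), hc]
    have h1 : (0:ℝ) ≤ ‖W n‖ := norm_nonneg _
    have h2 : (0:ℝ) ≤ β n := hβ0 n
    have hp : (0:ℝ) < (1/2:ℝ)^n := by positivity
    have hd : (0:ℝ) < (1 + ‖W n‖) * (1 + β n) :=
      mul_pos (by positivity) (by linarith)
    rw [div_mul_eq_mul_div, div_le_iff₀ hd]
    have hkey : ‖W n‖ ≤ (1 + ‖W n‖) * (1 + β n) := by nlinarith
    calc (1/2:ℝ)^n * ‖W n‖ ≤ (1/2:ℝ)^n * ((1 + ‖W n‖) * (1 + β n)) :=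
          mul_le_mul_of_nonneg_left hkey hp.le
      _ = (1/2:ℝ)^n * ((1 + ‖W n‖) * (1 + β n)) := rfl
  have hsummable : Summable (fun n => c n • W n) := by
    refine Summable.of_norm_bounded summable_geometric_two ?_
    intro n
    calc ‖c n • W n‖ ≤ (1/2)^n := hnormle n
      _ = (1/2:ℝ)^n := by norm_num
  set Z : Lp ℝ 2 P := ∑' n, c n • W n with hZ
  have hZsum : HasSum (fun n => c n • W n) Z := hsummable.hasSum
  -- order facts
  haveI : Fact ((1:ℝ≥0∞) ≤ 2) := fact_one_le_two_ennreal
  have hclosed_nonneg : IsClosed {g : Lp ℝ 2 P | 0 ≤ g} := isClosed_nonneg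
  have hterm_nonneg : ∀ n, (0 : Lp ℝ 2 P) ≤ c n • W n := by
    intro n
    rw [← Lp.coeFn_nonneg]
    filter_upwards [Lp.coeFn_smul (c n) (W n), hWnn n] with ω h1 h2
    rw [h1]
    simp only [Pi.smul_apply, smul_eq_mul]
    exact mul_nonneg (hcpos n).le h2
  set Sm : ℕ → Lp ℝ 2 P := fun m => ∑ n ∈ Finset.range m, c n • W n with hSm
  have htendS : Tendsto Sm atTop (nhds Z) := hZsum.tendsto_sum_nat
  have hSmnn : ∀ m, (0 : Lp ℝ 2 P) ≤ Sm m := fun m =>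
    Finset.sum_nonneg fun n _ => hterm_nonneg n
  have hZnn : (0 : Lp ℝ 2 P) ≤ Z :=
    hclosed_nonneg.mem_of_tendsto htendS (Eventually.of_forall hSmnn)
  have hSmleZ : ∀ m, Sm m ≤ Z := by
    intro m
    have htend2 : Tendsto (fun j => Sm j - Sm m) atTop (nhds (Z - Sm m)) :=
      htendS.sub tendsto_const_nhds
    have hmem : ∀ᶠ j in atTop, (0 : Lp ℝ 2 P) ≤ Sm j - Sm m := by
      rw [eventually_atTop]
      refine ⟨m, fun j hj => ?_⟩
      have : Sm j - Sm m = ∑ n ∈ Finset.Ico m j, c n • W n := by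
        rw [hSm]
        rw [Finset.sum_Ico_eq_sub _ hj]
      rw [this]
      exact Finset.sum_nonneg fun n _ => hterm_nonneg n
    have := hclosed_nonneg.mem_of_tendsto htend2 hmem
    simpa [sub_nonneg] using this
  have htermleZ : ∀ n, c n • W n ≤ Z := by
    intro n
    refine le_trans ?_ (hSmleZ (n+1))
    have : Sm (n+1) = Sm n + c n • W n := by rw [hSm]; exact Finset.sum_range_succ _ n
    rw [this]
    have := hSmnn n
    calc c n • W n = 0 + c n • W n := by rw [zero_add]
      _ ≤ Sm n + c n • W n := by exact add_le_add_left (hSmnn n) _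
  have hZnn_ae : 0 ≤ᵐ[P] ⇑Z := (Lp.coeFn_nonneg Z).mpr hZnn
  have htermleZ_ae : ∀ n, ∀ᵐ ω ∂P, c n * W n ω ≤ Z ω := by
    intro n
    have := (Lp.coeFn_le _ _).mpr (htermleZ n)
    filter_upwards [this, Lp.coeFn_smul (c n) (W n)] with ω h1 h2
    have h3 : (c n • W n) ω ≤ Z ω := h1
    rw [h2] at h3
    simpa using h3
  -- the uniform bound for Z
  have hZbound : ∀ x ∈ C, (∀ᵐ ω ∂P, -1 ≤ x ω) → ∫ ω, Z ω * x ω ∂P ≤ 2 := by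
    intro x hx hge
    set v : Lp ℝ 2 P := toL2 x with hv
    have hsum2 : HasSum (fun n => ⟪v, c n • W n⟫) ⟪v, Z⟫ := hZsum.mapL (innerSL ℝ v)
    have hterm_le : ∀ n, ⟪v, c n • W n⟫ ≤ (1/2:ℝ)^n := by
      intro n
      rw [real_inner_smul_right]
      have h1 : ⟪v, W n⟫ = ∫ ω, W n ω * x ω ∂P := by
        rw [real_inner_comm, inner_eq]
        refine integral_congr_ae ?_
        filter_upwards [toL2_ae x] with ω hω
        rw [hω]
      have h2 : ⟪v, W n⟫ ≤ β n := h1 ▸ hβ n x hx hge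
      have h3 : c n * ⟪v, W n⟫ ≤ c n * β n := by
        exact mul_le_mul_of_nonneg_left h2 (hcpos n).le
      refine le_trans h3 ?_
      have h4 : (0:ℝ) ≤ ‖W n‖ := norm_nonneg _
      have h5 : (0:ℝ) ≤ β n := hβ0 n
      have hp : (0:ℝ) < (1/2:ℝ)^n := by positivity
      have hd : (0:ℝ) < (1 + ‖W n‖) * (1 + β n) :=
        mul_pos (by positivity) (by linarith)
      rw [hc, div_mul_eq_mul_div, div_le_iff₀ hd]
      have hkey : β n ≤ (1 + ‖W n‖) * (1 + β n) := by nlinarith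
      calc (1/2:ℝ)^n * β n ≤ (1/2:ℝ)^n * ((1 + ‖W n‖) * (1 + β n)) :=
            mul_le_mul_of_nonneg_left hkey hp.le
        _ = _ := rfl
    have hZx : ∫ ω, Z ω * x ω ∂P = ⟪v, Z⟫ := by
      rw [real_inner_comm, inner_eq]
      refine integral_congr_ae ?_
      filter_upwards [toL2_ae x] with ω hω
      rw [hω]
    rw [hZx]
    have := hsum2.tsum_eq
    rw [← this]
    calc ∑' n, ⟪v, c n • W n⟫ ≤ ∑' n, (1/2:ℝ)^n :=
        Summable.tsum_le_tsum hterm_le hsum2.summable summable_geometric_two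
      _ = 2 := tsum_geometric_two
  -- measurability
  have hmeasZ : MeasurableSet {ω | 0 < Z ω} :=
    measurableSet_lt measurable_const (Lp.stronglyMeasurable Z).measurable
  have hmeasW : ∀ n, MeasurableSet {ω | 0 < W n ω} := fun n =>
    measurableSet_lt measurable_const (Lp.stronglyMeasurable (W n)).measurable
  -- the support of Z is maximal
  have hsupp : ∀ n, P {ω | 0 < W n ω} ≤ P {ω | 0 < Z ω} := by
    intro n
    refine measure_mono_ae ?_
    filter_upwards [htermleZ_ae n] with ω h1 h2
    have : (0:ℝ) < W n ω := h2
    have := mul_pos (hcpos n) this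
    exact lt_of_lt_of_le this h1
  have hZr : r ≤ (P {ω | 0 < Z ω}).toReal := by
    by_contra hcon
    push_neg at hcon
    obtain ⟨n, hn⟩ := exists_nat_one_div_lt (sub_pos.mpr hcon)
    have h1 := hWr n
    have h2 := ENNReal.toReal_mono (measure_ne_top P _) (hsupp n)
    have h3 : r - 1/(n+1) < (P {ω | 0 < Z ω}).toReal := lt_of_lt_of_le h1 h2
    linarith
  -- Z is a.e. positive
  have hfull : ∀ᵐ ω ∂P, 0 < Z ω := by
    by_contra hcon
    rw [ae_iff] at hcon
    set N : Set Ω := {ω | ¬ 0 < Z ω} with hN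
    have hNmeas : MeasurableSet N := hmeasZ.compl
    have hNpos : 0 < P N := by
      rcases eq_or_ne (P N) 0 with h | h
      · exact absurd h hcon
      · exact lt_of_le_of_ne zero_le (Ne.symm h)
    obtain ⟨W', hW'nn, hW'int, β', hβ'0, hβ'⟩ := hstar N hNmeas hNpos
    -- positive part of the support of W' inside N
    have hP' : 0 < P (N ∩ {ω | 0 < W' ω}) := by
      rcases eq_or_ne (P (N ∩ {ω | 0 < W' ω})) 0 with h | h
      swap
      · exact lt_of_le_of_ne zero_le (Ne.symm h)
      exfalso
      have hae : ∀ᵐ ω ∂P, ω ∉ N ∩ {ω | 0 < W' ω} := by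
        rw [ae_iff]
        have hset : {a | ¬ a ∉ N ∩ {ω | 0 < W' ω}} = N ∩ {ω | 0 < W' ω} := by
          ext ω; simp [hN, not_lt]
        rw [hset]
        exact h
      have : ∫ ω in N, W' ω ∂P = 0 := by
        have hzero : ∀ᵐ ω ∂P, ω ∈ N → W' ω = 0 := by
          filter_upwards [hae, hW'nn] with ω h1 h2 h3
          by_contra hne
          have : 0 < W' ω := lt_of_le_of_ne h2 (Ne.symm hne)
          exact h1 ⟨h3, this⟩
        calc ∫ ω in N, W' ω ∂P = ∫ ω in N, (0:ℝ) ∂P := by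
              refine setIntegral_congr_ae hNmeas ?_
              filter_upwards [hzero] with ω h1 h2 using h1 h2
          _ = 0 := by simp
      rw [this] at hW'int
      exact lt_irrefl _ hW'int
    -- the improved density
    set Znew : Lp ℝ 2 P := Z + W' with hZnew
    have hZnewS : Znew ∈ S := by
      refine ⟨?_, 2 + β', by linarith, ?_⟩
      · filter_upwards [Lp.coeFn_add Z W', hZnn_ae, hW'nn] with ω h1 h2 h3
        rw [h1]
        simp only [Pi.add_apply]
        exact add_nonneg h2 h3
      · intro x hx hge
        have heq : (fun ω => Znew ω * x ω) =ᵐ[P]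
            (fun ω => Z ω * x ω + W' ω * x ω) := by
          filter_upwards [Lp.coeFn_add Z W'] with ω h1
          rw [hZnew, h1]
          simp only [Pi.add_apply]
          ring
        rw [integral_congr_ae heq]
        have hint1 : Integrable (fun ω => Z ω * x ω) P := by
          have := L2.integrable_inner (𝕜 := ℝ) Z (toL2 x)
          refine this.congr ?_
          filter_upwards [toL2_ae x] with ω hω
          simp only [RCLike.inner_apply, conj_trivial]
          rw [hω]
          ring
        have hint2 : Integrable (fun ω => W' ω * x ω) P := by
          have := L2.integrable_inner (𝕜 := ℝ) W' (toL2 x)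
          refine this.congr ?_
          filter_upwards [toL2_ae x] with ω hω
          simp only [RCLike.inner_apply, conj_trivial]
          rw [hω]
          ring
        rw [integral_add hint1 hint2]
        exact add_le_add (hZbound x hx hge) (hβ' x hx hge)
    -- its support is strictly bigger
    have hsub : ∀ᵐ ω ∂P, ω ∈ {ω | 0 < Z ω} ∪ (N ∩ {ω | 0 < W' ω}) → 0 < Znew ω := by
      filter_upwards [Lp.coeFn_add Z W', hZnn_ae, hW'nn] with ω h1 h2 h3 h4
      have hZnew_eq : Znew ω = Z ω + W' ω := by rw [hZnew, h1]; simp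
      have h2' : (0:ℝ) ≤ Z ω := h2
      have h3' : (0:ℝ) ≤ W' ω := h3
      rcases h4 with h5 | h5
      · rw [hZnew_eq]
        have h6 : (0:ℝ) < Z ω := h5
        linarith
      · rw [hZnew_eq]
        have h6 : (0:ℝ) < W' ω := h5.2
        linarith
    have hmono : P ({ω | 0 < Z ω} ∪ (N ∩ {ω | 0 < W' ω})) ≤ P {ω | 0 < Znew ω} := by
      refine measure_mono_ae ?_
      filter_upwards [hsub] with ω h1 h2
      exact h1 h2
    have hdisj : Disjoint {ω | 0 < Z ω} (N ∩ {ω | 0 < W' ω}) := by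
      rw [Set.disjoint_left]
      rintro ω h1 ⟨h2, _⟩
      exact h2 h1
    have hunion : P ({ω | 0 < Z ω} ∪ (N ∩ {ω | 0 < W' ω}))
        = P {ω | 0 < Z ω} + P (N ∩ {ω | 0 < W' ω}) :=
      measure_union hdisj (hNmeas.inter (measurableSet_lt measurable_const
        (Lp.stronglyMeasurable W').measurable))
    -- contradiction with maximality
    have hle_r : (P {ω | 0 < Znew ω}).toReal ≤ r :=
      le_csSup hTbdd ⟨Znew, hZnewS, rfl⟩
    have hgt : r < (P {ω | 0 < Znew ω}).toReal := by
      have h1 : (P {ω | 0 < Z ω}).toReal + (P (N ∩ {ω | 0 < W' ω})).toReal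
          ≤ (P {ω | 0 < Znew ω}).toReal := by
        have := ENNReal.toReal_mono (measure_ne_top P _) (le_trans (le_of_eq hunion.symm) hmono)
        rwa [ENNReal.toReal_add (measure_ne_top P _) (measure_ne_top P _)] at this
      have h2 : 0 < (P (N ∩ {ω | 0 < W' ω})).toReal :=
        ENNReal.toReal_pos hP'.ne' (measure_ne_top P _)
      linarith
    linarith
  exact ⟨Z, hfull, 2, hZbound⟩

/-- Final step: from a positive density with a uniform bound, construct `Q`. -/
lemma final_step {C : Set (Lp ℝ ⊤ P)} (Z : Lp ℝ 2 P) (hZpos : ∀ᵐ ω ∂P, 0 < Z ω)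
    (β : ℝ) (hZb : ∀ x ∈ C, (∀ᵐ ω ∂P, -1 ≤ x ω) → ∫ ω, Z ω * x ω ∂P ≤ β) :
    ∃ Q : Measure Ω, IsProbabilityMeasure Q ∧ Q ≪ P ∧ P ≪ Q ∧
      ∃ M : ℝ, ∀ x ∈ C, (∀ᵐ ω ∂P, -1 ≤ x ω) → ∫ ω, x ω ∂Q ≤ M := by
  have hZnn : 0 ≤ᵐ[P] ⇑Z := by filter_upwards [hZpos] with ω hω using hω.le
  have hZint : Integrable (⇑Z) P := (Lp.memLp Z).integrable (by norm_num)
  set c : ℝ := ∫ ω, Z ω ∂P with hcdef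
  have hcpos : 0 < c := by
    rw [hcdef, integral_pos_iff_support_of_nonneg_ae hZnn hZint]
    have h1 : P univ ≤ P (Function.support fun ω => Z ω) := by
      refine measure_mono_ae ?_
      filter_upwards [hZpos] with ω hω _
      exact ne_of_gt hω
    have : (1:ℝ≥0∞) ≤ P (Function.support fun ω => Z ω) := by
      simpa [measure_univ] using h1
    exact lt_of_lt_of_le (by norm_num) this
  have hcinv : 0 < c⁻¹ := inv_pos.mpr hcpos
  set φ : Ω → ℝ≥0 := fun ω => Real.toNNReal (c⁻¹ * Z ω) with hφ
  have hφmeas : Measurable φ :=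
    ((Lp.stronglyMeasurable Z).measurable.const_mul c⁻¹).real_toNNReal
  set Q : Measure Ω := P.withDensity (fun ω => (φ ω : ℝ≥0∞)) with hQ
  have hcoe : ∀ ω, ((φ ω : ℝ≥0) : ℝ≥0∞) = ENNReal.ofReal (c⁻¹ * Z ω) := fun ω => rfl
  have hlint : ∫⁻ ω, (φ ω : ℝ≥0∞) ∂P = 1 := by
    have hint2 : Integrable (fun ω => c⁻¹ * Z ω) P := hZint.const_mul _
    have hnn2 : 0 ≤ᵐ[P] fun ω => c⁻¹ * Z ω := by
      filter_upwards [hZnn] with ω hω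
      exact mul_nonneg hcinv.le hω
    have heq : ∫ ω, c⁻¹ * Z ω ∂P = 1 := by
      rw [integral_const_mul]
      rw [← hcdef]
      field_simp
    calc ∫⁻ ω, (φ ω : ℝ≥0∞) ∂P = ∫⁻ ω, ENNReal.ofReal (c⁻¹ * Z ω) ∂P :=
          lintegral_congr fun ω => hcoe ω
      _ = ENNReal.ofReal (∫ ω, c⁻¹ * Z ω ∂P) :=
          (ofReal_integral_eq_lintegral_ofReal hint2 hnn2).symm
      _ = 1 := by rw [heq, ENNReal.ofReal_one]
  have hQprob : IsProbabilityMeasure Q := by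
    constructor
    rw [hQ, withDensity_apply _ MeasurableSet.univ, Measure.restrict_univ]
    exact hlint
  have hQP : Q ≪ P := withDensity_absolutelyContinuous _ _
  have hPQ : P ≪ Q := by
    refine Measure.AbsolutelyContinuous.mk ?_
    intro s hs hQs
    rw [hQ, withDensity_apply _ hs] at hQs
    have hmeas2 : Measurable fun ω => (φ ω : ℝ≥0∞) := hφmeas.coe_nnreal_ennreal
    have h0 : (fun ω => (φ ω : ℝ≥0∞)) =ᵐ[P.restrict s] 0 :=
      (lintegral_eq_zero_iff hmeas2).mp hQs
    have h0' : ∀ᵐ ω ∂(P.restrict s), (φ ω : ℝ≥0∞) = 0 := by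
      filter_upwards [h0] with ω hω using hω
    have h1 : ∀ᵐ ω ∂P, ω ∈ s → (φ ω : ℝ≥0∞) = 0 := (ae_restrict_iff' hs).mp h0'
    have h2 : ∀ᵐ ω ∂P, ω ∉ s := by
      filter_upwards [h1, hZpos] with ω hω hZω hmem
      have := hω hmem
      rw [hcoe ω] at this
      rw [ENNReal.ofReal_eq_zero] at this
      nlinarith
    rw [ae_iff] at h2
    have hset : {a | ¬ a ∉ s} = s := by ext ω; simp
    rwa [hset] at h2
  refine ⟨Q, hQprob, hQP, hPQ, c⁻¹ * β, ?_⟩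
  intro x hxC hge
  have hint : ∫ ω, x ω ∂Q = ∫ ω, φ ω • x ω ∂P := by
    rw [hQ]
    exact integral_withDensity_eq_integral_smul hφmeas _
  rw [hint]
  have heq : (fun ω => φ ω • x ω) =ᵐ[P] fun ω => c⁻¹ * (Z ω * x ω) := by
    filter_upwards [hZnn] with ω hω
    have hnn : 0 ≤ c⁻¹ * Z ω := mul_nonneg hcinv.le hω
    rw [hφ]
    simp only [NNReal.smul_def, Real.coe_toNNReal _ hnn, smul_eq_mul]
    ring
  rw [integral_congr_ae heq, integral_const_mul]
  exact mul_le_mul_of_nonneg_left (hZb x hxC hge) hcinv.le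

end KrepsYan

open KrepsYan in
set_option maxHeartbeats 1000000 in
/-- For a norm-closed convex cone `C ⊆ L^∞` with `C ∩ L^∞_+ = {0}` and
`-L^∞_+ ⊆ C`, there is a probability measure `Q` equivalent to `P` such that
`sup_{x ∈ C₁} ∫ x dQ < ∞`, where `C₁ = {x ∈ C : ess inf x ≥ -1}`. -/
theorem stmt1 {Ω : Type*} [MeasurableSpace Ω] (P : Measure Ω) [IsProbabilityMeasure P]
    (C : Set (Lp ℝ ⊤ P))
    (hclosed : IsClosed C) (hconv : Convex ℝ C)
    (hcone : ∀ (c : ℝ), 0 ≤ c → ∀ x ∈ C, c • x ∈ C)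
    (hC_pos : C ∩ {x : Lp ℝ ⊤ P | 0 ≤ᵐ[P] ⇑x} = {0})
    (hneg : ∀ x : Lp ℝ ⊤ P, 0 ≤ᵐ[P] ⇑x → -x ∈ C) :
    ∃ Q : Measure Ω, IsProbabilityMeasure Q ∧ Q ≪ P ∧ P ≪ Q ∧
      ∃ M : ℝ, ∀ x ∈ C, (-1 : ℝ) ≤ essInf (⇑x) P → ∫ ω, x ω ∂Q ≤ M := by
  classical
  have hstar : ∀ N : Set Ω, MeasurableSet N → 0 < P N →
      ∃ W : Lp ℝ 2 P, (0 ≤ᵐ[P] ⇑W) ∧ (0 < ∫ ω in N, W ω ∂P) ∧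
        ∃ β : ℝ, 0 ≤ β ∧ ∀ x ∈ C, (∀ᵐ ω ∂P, -1 ≤ x ω) → ∫ ω, W ω * x ω ∂P ≤ β := by
    intro N hN hNpos
    by_cases hcase : ∀ t : ℝ, 0 < t →
        t • (indicatorConstLp 2 hN (measure_ne_top P N) (1:ℝ)) ∈ closure (B2 P C)
    · exact (contradiction_of_selection hclosed hconv hcone hC_pos hneg hN hNpos
        (approx_selection hN hNpos hcase)).elim
    · push_neg at hcase
      obtain ⟨t, ht, hnm⟩ := hcase
      obtain ⟨W, h1, h2, β, hβ⟩ := density_of_not_mem_closure hconv hC_pos hN hNpos ht hnm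
      exact ⟨W, h1, h2, max β 0, le_max_right _ _,
        fun x hx hge => le_trans (hβ x hx hge) (le_max_left _ _)⟩
  obtain ⟨Z, hZpos, β, hZb⟩ := exists_positive_density hstar
  obtain ⟨Q, h1, h2, h3, M, hM⟩ := final_step Z hZpos β hZb
  exact ⟨Q, h1, h2, h3, M, fun x hx hess => hM x hx (ae_neg_one_le x hess)⟩
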